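/- Under Assumption 1 (f convex on closed convex S with minimizer x*, smooth approximations f_μ convex with (L' + L/μ)-Lipschitz gradient and 0 ≤ f_{μ₂} − f_{μ₁} ≤ β(μ₁ − μ₂)), the Lyapunov function E_k = (a_k²/L_k)(f_k(x^k) − f_k(x*) + β μ_k) + (1/2)‖z^k − x*‖² of the smoothing accelerated projected gradient method with μ_k = μ_0/(k+1), L_k = L' + L/μ_k satisfies E_{k+1} ≤ E_k + β a_{k+1} μ_k / L_k for all k ≥ 0. -/

import Mathlib

open scoped RealInnerProductSpace Topology

variable {F : Type*} [NormedAddCommGroup F] [InnerProductSpace ℝ F] [CompleteSpace F]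

-- Helper: derivative of f along a line
lemma line_hasDerivAt {f : F → ℝ} {p v : F} {t : ℝ} (h : DifferentiableAt ℝ f (p + t • v)) :
    HasDerivAt (fun s : ℝ => f (p + s • v)) ⟪gradient f (p + t • v), v⟫ t := by
  have hg : HasFDerivAt f ((InnerProductSpace.toDual ℝ F) (gradient f (p + t • v))) (p + t • v) :=
    h.hasGradientAt
  have hline : HasDerivAt (fun s : ℝ => p + s • v) v t := by
    simpa using ((hasDerivAt_id t).smul_const v).const_add p
  have h2 := hg.comp_hasDerivAt t hline
  simp at h2 ⊢
  exact h2

-- Helper 1: first-order condition for convexity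
lemma convex_first_order {s : Set F} (hs : Convex ℝ s) {f : F → ℝ}
    (hf : ConvexOn ℝ s f) {x y : F} (hx : x ∈ s) (hy : y ∈ s)
    (hd : DifferentiableAt ℝ f y) :
    f y + ⟪gradient f y, x - y⟫ ≤ f x := by
  set φ : ℝ → ℝ := fun t => f (y + t • (x - y)) with hφ
  have hder : HasDerivAt φ ⟪gradient f y, x - y⟫ 0 := by
    have := line_hasDerivAt (f := f) (p := y) (v := x - y) (t := 0)
      (by simpa using hd)
    simpa using this
  have hslope : Filter.Tendsto (slope φ 0) (𝓝[>] 0) (𝓝 ⟪gradient f y, x - y⟫) :=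
    (hasDerivAt_iff_tendsto_slope.mp hder).mono_left
      (nhdsWithin_mono 0 (fun t ht => ne_of_gt ht))
  have hbound : ∀ᶠ t in 𝓝[>] (0:ℝ), slope φ 0 t ≤ f x - f y := by
    filter_upwards [Ioc_mem_nhdsGT_of_mem (by norm_num : (0:ℝ) ∈ Set.Ico 0 1)] with t ht
    obtain ⟨ht0, ht1⟩ := ht
    have hcx : φ t ≤ (1 - t) * f y + t * f x := by
      have := hf.2 hy hx (show (0:ℝ) ≤ 1 - t by linarith) ht0.le (show (1 - t) + t = 1 by ring)
      have hpt : y + t • (x - y) = (1 - t) • y + t • x := by module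
      calc φ t = f ((1-t) • y + t • x) := by rw [hφ]; simp only [hpt]
        _ ≤ (1-t) * f y + t * f x := by simpa [smul_eq_mul] using this
    have hφ0 : φ 0 = f y := by simp [hφ]
    rw [slope_def_field, hφ0, show t - (0:ℝ) = t by ring, div_le_iff₀ ht0]
    nlinarith [hcx]
  have := le_of_tendsto hslope hbound
  linarith


-- Helper 2: descent lemma
lemma descent_lemma {s : Set F} (hs : Convex ℝ s) {f : F → ℝ} {C : NNReal}
    (hd : ∀ w ∈ s, DifferentiableAt ℝ f w)
    (hlip : LipschitzOnWith C (gradient f) s) {x y : F} (hx : x ∈ s) (hy : y ∈ s) :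
    f x ≤ f y + ⟪gradient f y, x - y⟫ + (C : ℝ) / 2 * ‖x - y‖ ^ 2 := by
  set c : ℝ → F := fun t => y + t • (x - y) with hc
  have hmem : ∀ t ∈ Set.Icc (0:ℝ) 1, c t ∈ s := by
    intro t ht
    have hpt : c t = (1 - t) • y + t • x := by simp only [hc]; module
    rw [hpt]
    exact hs hy hx (by linarith [ht.2]) ht.1 (by ring)
  set ψ : ℝ → ℝ := fun t => ⟪gradient f (c t), x - y⟫ with hψ
  have hder : ∀ t ∈ Set.Icc (0:ℝ) 1, HasDerivAt (fun t => f (c t)) (ψ t) t := by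
    intro t ht
    exact line_hasDerivAt (hd _ (hmem t ht))
  have hcont : ContinuousOn ψ (Set.Icc 0 1) := by
    apply ContinuousOn.inner
    · apply hlip.continuousOn.comp (by fun_prop : Continuous c).continuousOn hmem
    · exact continuousOn_const
  have hint : IntervalIntegrable ψ MeasureTheory.volume 0 1 := by
    apply ContinuousOn.intervalIntegrable
    rwa [Set.uIcc_of_le (by norm_num : (0:ℝ) ≤ 1)]
  have hFTC : f (c 1) - f (c 0) = ∫ t in (0:ℝ)..1, ψ t := by
    have := intervalIntegral.integral_eq_sub_of_hasDerivAt (f := fun t => f (c t))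
      (f' := ψ) (a := 0) (b := 1)
      (fun t ht => hder t (by rwa [Set.uIcc_of_le (by norm_num : (0:ℝ) ≤ 1)] at ht)) hint
    simpa using this.symm
  have hbnd : ∀ t ∈ Set.Icc (0:ℝ) 1, ψ t ≤ ψ 0 + (C : ℝ) * t * ‖x - y‖ ^ 2 := by
    intro t ht
    have h0 : c 0 = y := by simp [hc]
    have hdist : ‖c t - c 0‖ = t * ‖x - y‖ := by
      simp only [hc]
      rw [show y + t • (x - y) - (y + (0:ℝ) • (x-y)) = t • (x - y) by module,
        norm_smul, Real.norm_of_nonneg ht.1]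
    have hlipn : ‖gradient f (c t) - gradient f (c 0)‖ ≤ (C:ℝ) * (t * ‖x - y‖) := by
      have := hlip.norm_sub_le (hmem t ht) (hmem 0 (by norm_num))
      rwa [hdist] at this
    have hinner : ψ t - ψ 0 = ⟪gradient f (c t) - gradient f (c 0), x - y⟫ := by
      simp [hψ, inner_sub_left]
    have := real_inner_le_norm (gradient f (c t) - gradient f (c 0)) (x - y)
    have hn : ‖gradient f (c t) - gradient f (c 0)‖ * ‖x - y‖ ≤ (C:ℝ) * (t * ‖x-y‖) * ‖x-y‖ :=
      mul_le_mul_of_nonneg_right hlipn (norm_nonneg _)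
    nlinarith [this, hn]
  have hintle : (∫ t in (0:ℝ)..1, ψ t) ≤ ∫ t in (0:ℝ)..1, (ψ 0 + (C:ℝ) * t * ‖x - y‖ ^ 2) := by
    apply intervalIntegral.integral_mono_on (by norm_num) hint
    · apply IntervalIntegrable.add intervalIntegrable_const
      apply Continuous.intervalIntegrable
      fun_prop
    · exact hbnd
  have hval : (∫ t in (0:ℝ)..1, (ψ 0 + (C:ℝ) * t * ‖x - y‖ ^ 2)) =
      ψ 0 + (C:ℝ) / 2 * ‖x - y‖ ^ 2 := by
    rw [intervalIntegral.integral_add intervalIntegrable_const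
      (by apply Continuous.intervalIntegrable; fun_prop)]
    simp only [intervalIntegral.integral_const, smul_eq_mul]
    have : (∫ t in (0:ℝ)..1, (C:ℝ) * t * ‖x - y‖ ^ 2) =
        ((C:ℝ) * ‖x - y‖ ^ 2) * ∫ t in (0:ℝ)..1, t := by
      rw [← intervalIntegral.integral_const_mul]
      congr 1; ext t; ring
    rw [this, integral_id]
    ring
  have hc1 : c 1 = x := by simp [hc]
  have hc0 : c 0 = y := by simp [hc]
  have hψ0 : ψ 0 = ⟪gradient f y, x - y⟫ := by simp [hψ, hc0]
  rw [hc1, hc0] at hFTC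
  rw [hval, hψ0] at hintle
  linarith [hFTC ▸ hintle]

-- Helper 3: variational inequality for projections
lemma proj_vi {s : Set F} (hs : Convex ℝ s) {p v : F} (hv : v ∈ s)
    (hmin : ∀ w ∈ s, ‖v - p‖ ≤ ‖w - p‖) : ∀ w ∈ s, ⟪p - v, w - v⟫ ≤ 0 := by
  have : Nonempty s := ⟨⟨v, hv⟩⟩
  have heq : ‖p - v‖ = ⨅ w : s, ‖p - w‖ := by
    apply le_antisymm
    · apply le_ciInf
      intro w
      rw [norm_sub_rev p v, norm_sub_rev p w]
      exact hmin w w.2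
    · exact ciInf_le (f := fun w : s => ‖p - (w : F)‖)
        ⟨0, by rintro _ ⟨w, rfl⟩; exact norm_nonneg _⟩ ⟨v, hv⟩
  exact (norm_eq_iInf_iff_real_inner_le_zero hs hv).mp heq

set_option maxHeartbeats 1000000 in
theorem stmt_14 (m : ℕ) (S : Set (EuclideanSpace ℝ (Fin m)))
    (hS : S.Nonempty) (hSc : IsClosed S) (hScv : Convex ℝ S)
    (f : ℝ → EuclideanSpace ℝ (Fin m) → ℝ)
    (β μ0 L L' : ℝ) (hβ : 0 < β) (hμ0 : 0 < μ0) (hL : 0 < L) (hL' : 0 ≤ L')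
    -- Assumption 1: convexity, differentiability, Lipschitz gradient, sandwich
    (hconv : ∀ μ : ℝ, 0 < μ → ConvexOn ℝ S (f μ))
    (hdiff : ∀ μ : ℝ, 0 < μ → ∀ w ∈ S, DifferentiableAt ℝ (f μ) w)
    (hlip : ∀ μ : ℝ, 0 < μ →
      LipschitzOnWith (Real.toNNReal (L' + L / μ)) (gradient (f μ)) S)
    (hsandwich : ∀ w ∈ S, ∀ μ₁ μ₂ : ℝ, 0 ≤ μ₂ → μ₂ ≤ μ₁ →
      0 ≤ f μ₂ w - f μ₁ w ∧ f μ₂ w - f μ₁ w ≤ β * (μ₁ - μ₂))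
    (xstar : EuclideanSpace ℝ (Fin m)) (hxstarS : xstar ∈ S)
    (hmin : ∀ w ∈ S, f 0 xstar ≤ f 0 w)
    -- Algorithm 1 (S-APG)
    (μ : ℕ → ℝ) (hμ : ∀ k : ℕ, μ k = μ0 / (k + 1))
    (Lk : ℕ → ℝ) (hLk : ∀ k : ℕ, Lk k = L' + L / μ k)
    (a : ℕ → ℝ) (ha0 : a 0 = 0)
    (harec : ∀ k : ℕ, a (k + 1) = (1 + Real.sqrt (4 * (a k) ^ 2 + 1)) / 2)
    (x y z : ℕ → EuclideanSpace ℝ (Fin m))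
    (hx0 : x 0 = z 0) (hx0S : x 0 ∈ S)
    (hy : ∀ k : ℕ, y k = (1 - 1 / a (k + 1)) • x k + (1 / a (k + 1)) • z k)
    (hzS : ∀ k : ℕ, z (k + 1) ∈ S)
    (hproj : ∀ k : ℕ, ∀ w ∈ S,
      ‖z (k + 1) - (z k - (a (k + 1) / Lk k) • gradient (f (μ k)) (y k))‖ ≤
        ‖w - (z k - (a (k + 1) / Lk k) • gradient (f (μ k)) (y k))‖)
    (hxrec : ∀ k : ℕ, x (k + 1) = (1 - 1 / a (k + 1)) • x k + (1 / a (k + 1)) • z (k + 1))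
    -- Lyapunov function
    (E : ℕ → ℝ)
    (hE : ∀ k : ℕ, E k = ((a k) ^ 2 / Lk k) * (f (μ k) (x k) - f (μ k) xstar + β * μ k)
      + (1 / 2) * ‖z k - xstar‖ ^ 2) :
    ∀ k : ℕ, E (k + 1) ≤ E k + β * a (k + 1) * μ k / Lk k := by
  -- basic positivity facts
  have hμpos : ∀ k : ℕ, 0 < μ k := by
    intro k; rw [hμ k]; positivity
  have hμmono : ∀ k : ℕ, μ (k + 1) ≤ μ k := by
    intro k; rw [hμ k, hμ (k + 1)]
    apply div_le_div_of_nonneg_left hμ0.le (by positivity)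
    push_cast; linarith
  have hLpos : ∀ k : ℕ, 0 < Lk k := by
    intro k; rw [hLk k]
    have := hμpos k; positivity
  have hLmono : ∀ k : ℕ, Lk k ≤ Lk (k + 1) := by
    intro k; rw [hLk k, hLk (k + 1)]
    have h1 := hμpos k; have h2 := hμpos (k + 1)
    have := div_le_div_of_nonneg_left hL.le h2 (hμmono k)
    linarith
  have haone : ∀ n : ℕ, 1 ≤ a (n + 1) := by
    intro n
    have h1 : (1:ℝ) ≤ Real.sqrt (4 * (a n) ^ 2 + 1) := by
      have h := Real.sqrt_le_sqrt (show (1:ℝ) ≤ 4 * (a n) ^ 2 + 1 by nlinarith [sq_nonneg (a n)])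
      rwa [Real.sqrt_one] at h
    rw [harec n]; linarith
  have hanneg : ∀ n : ℕ, 0 ≤ a n := by
    intro n
    match n with
    | 0 => rw [ha0]
    | Nat.succ j => linarith [haone j]
  have ha2 : ∀ n : ℕ, (a (n + 1)) ^ 2 - a (n + 1) = (a n) ^ 2 := by
    intro n
    have hs : (Real.sqrt (4 * (a n) ^ 2 + 1)) ^ 2 = 4 * (a n) ^ 2 + 1 :=
      Real.sq_sqrt (by positivity)
    rw [harec n]
    linear_combination (1/4 : ℝ) * hs
  -- membership facts
  have hmemS : ∀ k : ℕ, x k ∈ S ∧ z k ∈ S := by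
    intro k
    induction k with
    | zero => exact ⟨hx0S, hx0 ▸ hx0S⟩
    | succ n ih =>
      refine ⟨?_, hzS n⟩
      rw [hxrec n]
      have hA := haone n
      exact hScv ih.1 (hzS n) (by rw [sub_nonneg]; exact div_le_one_of_le₀ (by linarith) (by linarith))
        (by positivity) (by ring)
  have hyS : ∀ k : ℕ, y k ∈ S := by
    intro k
    rw [hy k]
    have hA := haone k
    exact hScv (hmemS k).1 (hmemS k).2
      (by rw [sub_nonneg]; exact div_le_one_of_le₀ (by linarith) (by linarith))
      (by positivity) (by ring)
  intro k
  have hμk := hμpos k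
  have hμk1 := hμpos (k + 1)
  have hℓpos : 0 < Lk k := hLpos k
  have hL1pos : 0 < Lk (k + 1) := hLpos (k + 1)
  have hA1 : 1 ≤ a (k + 1) := haone k
  have hApos : 0 < a (k + 1) := by linarith
  have hθpos : (0:ℝ) < 1 / a (k + 1) := by positivity
  have hθ1 : 1 / a (k + 1) ≤ 1 := div_le_one_of_le₀ hA1 (by linarith)
  -- descent lemma
  have hC : ((Real.toNNReal (L' + L / μ k)) : ℝ) = Lk k := by
    rw [Real.coe_toNNReal _ (by rw [← hLk k]; exact hℓpos.le)]
    exact (hLk k).symm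
  have h1 : f (μ k) (x (k + 1)) ≤ f (μ k) (y k)
      + ⟪gradient (f (μ k)) (y k), x (k + 1) - y k⟫
      + Lk k / 2 * ‖x (k + 1) - y k‖ ^ 2 := by
    have := descent_lemma hScv (hdiff (μ k) hμk) (hlip (μ k) hμk)
      (hmemS (k + 1)).1 (hyS k)
    rwa [hC] at this
  -- convexity inequalities
  have h2 : f (μ k) (y k) + ⟪gradient (f (μ k)) (y k), x k - y k⟫ ≤ f (μ k) (x k) :=
    convex_first_order hScv (hconv (μ k) hμk) (hmemS k).1 (hyS k)
      (hdiff (μ k) hμk (y k) (hyS k))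
  have h3 : f (μ k) (y k) + ⟪gradient (f (μ k)) (y k), xstar - y k⟫ ≤ f (μ k) xstar :=
    convex_first_order hScv (hconv (μ k) hμk) hxstarS (hyS k)
      (hdiff (μ k) hμk (y k) (hyS k))
  -- vector identities
  have hvec1 : x (k + 1) - y k = (1 / a (k + 1)) • (z (k + 1) - z k) := by
    rw [hxrec k, hy k]; module
  have hvec2 : x (k + 1) - y k = (1 - 1 / a (k + 1)) • (x k - y k)
      + (1 / a (k + 1)) • (xstar - y k) + (1 / a (k + 1)) • (z (k + 1) - xstar) := by
    rw [hxrec k]; module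
  have hinner : ⟪gradient (f (μ k)) (y k), x (k + 1) - y k⟫
      = (1 - 1 / a (k + 1)) * ⟪gradient (f (μ k)) (y k), x k - y k⟫
      + (1 / a (k + 1)) * ⟪gradient (f (μ k)) (y k), xstar - y k⟫
      + (1 / a (k + 1)) * ⟪gradient (f (μ k)) (y k), z (k + 1) - xstar⟫ := by
    rw [hvec2]
    simp only [inner_add_right, real_inner_smul_right]
  have hnorm1 : ‖x (k + 1) - y k‖ ^ 2 = (1 / a (k + 1)) ^ 2 * ‖z (k + 1) - z k‖ ^ 2 := by
    rw [hvec1, norm_smul, Real.norm_eq_abs, mul_pow, sq_abs]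
  -- the combined descent inequality
  have h2' : (1 - 1 / a (k + 1)) * (f (μ k) (y k)
        + ⟪gradient (f (μ k)) (y k), x k - y k⟫)
      ≤ (1 - 1 / a (k + 1)) * f (μ k) (x k) :=
    mul_le_mul_of_nonneg_left h2 (by linarith)
  have h3' : (1 / a (k + 1)) * (f (μ k) (y k)
        + ⟪gradient (f (μ k)) (y k), xstar - y k⟫)
      ≤ (1 / a (k + 1)) * f (μ k) xstar :=
    mul_le_mul_of_nonneg_left h3 hθpos.le
  have hstar : f (μ k) (x (k + 1)) - f (μ k) xstar
      ≤ (1 - 1 / a (k + 1)) * (f (μ k) (x k) - f (μ k) xstar)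
      + (1 / a (k + 1)) * ⟪gradient (f (μ k)) (y k), z (k + 1) - xstar⟫
      + Lk k * (1 / a (k + 1)) ^ 2 / 2 * ‖z (k + 1) - z k‖ ^ 2 := by
    rw [hinner, hnorm1] at h1
    nlinarith [h1, h2', h3']
  -- the projection variational inequality
  have hvi := proj_vi hScv (hzS k) (hproj k) xstar hxstarS
  have e1 : z k - (a (k + 1) / Lk k) • gradient (f (μ k)) (y k) - z (k + 1)
      = -((z (k + 1) - z k) + (a (k + 1) / Lk k) • gradient (f (μ k)) (y k)) := by
    module
  have e2 : xstar - z (k + 1) = -(z (k + 1) - xstar) := by module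
  rw [e1, e2, inner_neg_neg, inner_add_left, real_inner_smul_left] at hvi
  -- norm expansion
  have hns : ‖z k - xstar‖ ^ 2 = ‖z (k + 1) - xstar‖ ^ 2
      - 2 * ⟪z (k + 1) - z k, z (k + 1) - xstar⟫ + ‖z (k + 1) - z k‖ ^ 2 := by
    rw [show z k - xstar = (z (k + 1) - xstar) - (z (k + 1) - z k) by module,
      norm_sub_sq_real, real_inner_comm]
  have hvi3 : a (k + 1) / Lk k * ⟪gradient (f (μ k)) (y k), z (k + 1) - xstar⟫
      ≤ (‖z k - xstar‖ ^ 2 - ‖z (k + 1) - xstar‖ ^ 2 - ‖z (k + 1) - z k‖ ^ 2) / 2 := by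
    linarith [hvi, hns]
  -- key inequality
  have heq : (a (k + 1)) ^ 2 / Lk k * ((1 - 1 / a (k + 1)) * (f (μ k) (x k) - f (μ k) xstar)
      + (1 / a (k + 1)) * ⟪gradient (f (μ k)) (y k), z (k + 1) - xstar⟫
      + Lk k * (1 / a (k + 1)) ^ 2 / 2 * ‖z (k + 1) - z k‖ ^ 2)
      = (a k) ^ 2 / Lk k * (f (μ k) (x k) - f (μ k) xstar)
      + a (k + 1) / Lk k * ⟪gradient (f (μ k)) (y k), z (k + 1) - xstar⟫
      + 1 / 2 * ‖z (k + 1) - z k‖ ^ 2 := by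
    rw [← ha2 k]
    field_simp
  have hmul := mul_le_mul_of_nonneg_left hstar
    (show (0:ℝ) ≤ (a (k + 1)) ^ 2 / Lk k by positivity)
  rw [heq] at hmul
  have hkey : (a (k + 1)) ^ 2 / Lk k * (f (μ k) (x (k + 1)) - f (μ k) xstar)
      + 1 / 2 * ‖z (k + 1) - xstar‖ ^ 2
      ≤ (a k) ^ 2 / Lk k * (f (μ k) (x k) - f (μ k) xstar)
      + 1 / 2 * ‖z k - xstar‖ ^ 2 := by
    linarith [hmul, hvi3]
  -- smoothing parameter comparisons
  have hx1S := (hmemS (k + 1)).1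
  have hs1 := hsandwich (x (k + 1)) hx1S (μ k) (μ (k + 1)) hμk1.le (hμmono k)
  have hs2 := hsandwich xstar hxstarS (μ k) (μ (k + 1)) hμk1.le (hμmono k)
  have hs3 := hsandwich (x (k + 1)) hx1S (μ (k + 1)) 0 le_rfl hμk1.le
  have hs4 := hsandwich xstar hxstarS (μ (k + 1)) 0 le_rfl hμk1.le
  have hm := hmin (x (k + 1)) hx1S
  have hB'0 : 0 ≤ f (μ (k + 1)) (x (k + 1)) - f (μ (k + 1)) xstar + β * μ (k + 1) := by
    have := hs3.2; have := hs4.1; linarith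
  have hB'B : f (μ (k + 1)) (x (k + 1)) - f (μ (k + 1)) xstar + β * μ (k + 1)
      ≤ f (μ k) (x (k + 1)) - f (μ k) xstar + β * μ k := by
    have := hs1.2; have := hs2.1; linarith
  have hterm : (a (k + 1)) ^ 2 / Lk (k + 1)
        * (f (μ (k + 1)) (x (k + 1)) - f (μ (k + 1)) xstar + β * μ (k + 1))
      ≤ (a (k + 1)) ^ 2 / Lk k * (f (μ k) (x (k + 1)) - f (μ k) xstar + β * μ k) := by
    have t0 : (a (k + 1)) ^ 2 / Lk (k + 1) ≤ (a (k + 1)) ^ 2 / Lk k :=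
      div_le_div_of_nonneg_left (sq_nonneg _) hℓpos (hLmono k)
    calc (a (k + 1)) ^ 2 / Lk (k + 1)
          * (f (μ (k + 1)) (x (k + 1)) - f (μ (k + 1)) xstar + β * μ (k + 1))
        ≤ (a (k + 1)) ^ 2 / Lk k
          * (f (μ (k + 1)) (x (k + 1)) - f (μ (k + 1)) xstar + β * μ (k + 1)) :=
          mul_le_mul_of_nonneg_right t0 hB'0
      _ ≤ (a (k + 1)) ^ 2 / Lk k * (f (μ k) (x (k + 1)) - f (μ k) xstar + β * μ k) :=
          mul_le_mul_of_nonneg_left hB'B (by positivity)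
  -- final assembly
  have hfin : (a (k + 1)) ^ 2 / Lk k * (β * μ k)
      = (a k) ^ 2 / Lk k * (β * μ k) + β * a (k + 1) * μ k / Lk k := by
    rw [← ha2 k]; field_simp; ring
  have hd1 : (a (k + 1)) ^ 2 / Lk k * (f (μ k) (x (k + 1)) - f (μ k) xstar + β * μ k)
      = (a (k + 1)) ^ 2 / Lk k * (f (μ k) (x (k + 1)) - f (μ k) xstar)
      + (a (k + 1)) ^ 2 / Lk k * (β * μ k) := by ring
  have hd2 : (a k) ^ 2 / Lk k * (f (μ k) (x k) - f (μ k) xstar + β * μ k)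
      = (a k) ^ 2 / Lk k * (f (μ k) (x k) - f (μ k) xstar)
      + (a k) ^ 2 / Lk k * (β * μ k) := by ring
  rw [hE (k + 1), hE k]
  linarith [hterm, hkey, hfin, hd1, hd2]
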